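/- Let H be a subgyrogroup of a gyrogroup G. Then the collection of left cosets G/H = {a ⊕ H : a ∈ G} is an invariant set of the geometry (G, Γ_m) (i.e., T(X) ∈ G/H for every X ∈ G/H and T ∈ Γ_m) if and only if H is strong in G, meaning gyr[a,b](H) = H for all a, b ∈ G. -/

import Mathlib

/-- A gyrogroup: a set with a binary operation `op`, a left identity `e`, left inverses
`inv`, and gyroautomorphisms `gyr a b` (bijective and operation-preserving) satisfying the
left gyroassociative law and the left loop property. -/
class Gyrogroup (G : Type*) where
  /-- the gyrogroup operation `⊕` -/
  op : G → G → G
  /-- the identity element -/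
  e : G
  /-- the inverse `⊖a` -/
  inv : G → G
  /-- (G1) `e ⊕ a = a` -/
  op_e : ∀ a : G, op e a = a
  /-- (G2) `⊖a ⊕ a = e` -/
  op_inv : ∀ a : G, op (inv a) a = e
  /-- the gyroautomorphism `gyr[a, b]` -/
  gyr : G → G → G → G
  /-- (G3) `gyr[a, b]` is bijective -/
  gyr_bijective : ∀ a b : G, Function.Bijective (gyr a b)
  /-- (G3) `gyr[a, b]` preserves the operation -/
  gyr_op : ∀ a b x y : G, gyr a b (op x y) = op (gyr a b x) (gyr a b y)
  /-- (G3) the left gyroassociative law -/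
  gyrassoc : ∀ a b c : G, op a (op b c) = op (op a b) (gyr a b c)
  /-- (G4) the left loop property -/
  loop : ∀ a b : G, gyr (op a b) b = gyr a b

namespace Gyrogroup

variable {G : Type*} [Gyrogroup G]

theorem key (x z : G) : op (inv x) (op x z) = gyr (inv x) x z := by
  rw [gyrassoc, op_inv, op_e]

theorem L_injective (x : G) : Function.Injective (op x) := by
  intro z₁ z₂ h
  have h1 : gyr (inv x) x z₁ = gyr (inv x) x z₂ := by
    rw [← key, ← key, h]
  exact (gyr_bijective (inv x) x).1 h1

theorem L_surjective (x : G) : Function.Surjective (op x) := by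
  intro w
  obtain ⟨z, hz⟩ := (gyr_bijective (inv x) x).2 (op (inv x) w)
  exact ⟨z, L_injective (inv x) (by rw [key, hz])⟩

theorem L_bijective (x : G) : Function.Bijective (op x) :=
  ⟨L_injective x, L_surjective x⟩

/-- The left gyrotranslation `L_a : x ↦ a ⊕ x` as a permutation of `G`. -/
noncomputable def Lperm (a : G) : Equiv.Perm G := Equiv.ofBijective (op a) (L_bijective a)

/-- The gyroautomorphism `gyr[a, b]` as a permutation of `G`. -/
noncomputable def gyrPerm (a b : G) : Equiv.Perm G := Equiv.ofBijective (gyr a b) (gyr_bijective a b)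

/-- `GYR(G)`: the subgroup of `Sym(G)` generated by all gyroautomorphisms. -/
def GYR (G : Type*) [Gyrogroup G] : Subgroup (Equiv.Perm G) :=
  Subgroup.closure {π : Equiv.Perm G | ∃ a b : G, π = gyrPerm a b}

/-- `Γₘ = {L_a ∘ γ : a ∈ G, γ ∈ GYR(G)}`, a subgroup of `Sym(G)`. -/
def Γm (G : Type*) [Gyrogroup G] : Set (Equiv.Perm G) :=
  {T : Equiv.Perm G | ∃ a : G, ∃ γ ∈ GYR G, T = Lperm a * γ}

end Gyrogroup

/-- A set of figures is invariant if it is closed under all transformations of the geometry. -/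
def IsInvariantSet {S : Type*} (𝒯 : Set (Equiv.Perm S)) (𝒞 : Set (Set S)) : Prop :=
  ∀ F ∈ 𝒞, ∀ t ∈ 𝒯, ⇑t '' F ∈ 𝒞

/-- An invariant set is minimally invariant if it contains no nonempty proper invariant
subset. -/
def IsMinimallyInvariantSet {S : Type*} (𝒯 : Set (Equiv.Perm S)) (𝒞 : Set (Set S)) : Prop :=
  IsInvariantSet 𝒯 𝒞 ∧ ∀ 𝒟 ⊆ 𝒞, IsInvariantSet 𝒯 𝒟 → 𝒟.Nonempty → 𝒟 = 𝒞

/-- `H` is a subgyrogroup of the gyrogroup `G`: it is nonempty, closed under the gyrogroup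
operation and inverses (hence a gyrogroup under the operation of `G`), and
`gyr[a,b](H) = H` for all `a, b ∈ H`. -/
def IsSubgyrogroup {G : Type*} [Gyrogroup G] (H : Set G) : Prop :=
  H.Nonempty ∧ (∀ a ∈ H, ∀ b ∈ H, Gyrogroup.op a b ∈ H) ∧
    (∀ a ∈ H, Gyrogroup.inv a ∈ H) ∧
    ∀ a ∈ H, ∀ b ∈ H, Gyrogroup.gyr a b '' H = H


namespace Gyrogroup

variable {G : Type*} [Gyrogroup G]

theorem gyr_e_fst (b c : G) : gyr e b c = c := by
  have h := gyrassoc e b c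
  rw [op_e, op_e] at h
  exact (L_injective b h).symm

theorem left_cancel (a z : G) : op (inv a) (op a z) = z := by
  have h : gyr (inv a) a = gyr e a := by
    conv_rhs => rw [← op_inv a, loop]
  rw [key, h, gyr_e_fst]

theorem op_e_right (a : G) : op a e = a := by
  apply L_injective (inv a)
  rw [left_cancel, op_inv]

theorem op_inv_right (a : G) : op a (inv a) = e := by
  apply L_injective (inv a)
  rw [left_cancel, op_e_right]

theorem inv_inv (a : G) : inv (inv a) = a := by
  have h := left_cancel (inv a) a
  rw [op_inv, op_e_right] at h
  exact h

theorem gyr_e (a b : G) : gyr a b e = e := by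
  have h : gyr a b (op e e) = op (gyr a b e) (gyr a b e) := gyr_op a b e e
  rw [op_e] at h
  apply L_injective (gyr a b e)
  rw [← h, op_e_right]

theorem eq_inv_of_op_eq_e {c h : G} (hch : op c h = e) : c = inv h := by
  have h1 : h = inv c := by
    have := left_cancel c h
    rw [hch, op_e_right] at this
    exact this.symm
  rw [h1, inv_inv]

theorem coset_self {H : Set G} (hH : IsSubgyrogroup H) {c : G} (hc : c ∈ H) :
    op c '' H = H := by
  apply Set.Subset.antisymm
  · rintro _ ⟨h, hh, rfl⟩
    exact hH.2.1 c hc h hh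
  · intro h hh
    have hinvc : inv c ∈ H := hH.2.2.1 c hc
    have hgyr : gyr c (inv c) '' H = H := hH.2.2.2 c hc (inv c) hinvc
    rw [← hgyr] at hh
    obtain ⟨h'', hh'', rfl⟩ := hh
    refine ⟨op (inv c) h'', hH.2.1 _ hinvc _ hh'', ?_⟩
    rw [gyrassoc, op_inv_right, op_e]

theorem e_mem {H : Set G} (hH : IsSubgyrogroup H) : e ∈ H := by
  obtain ⟨h, hh⟩ := hH.1
  have := hH.2.1 _ (hH.2.2.1 h hh) h hh
  rwa [op_inv] at this

theorem op_image_op_image {H : Set G} (hst : ∀ a b : G, gyr a b '' H = H) (a c : G) :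
    op a '' (op c '' H) = op (op a c) '' H := by
  conv_rhs => rw [← hst a c]
  rw [Set.image_image, Set.image_image]
  exact Set.image_congr fun h _ => gyrassoc a c h

end Gyrogroup

open Gyrogroup in
/-- Let `H` be a subgyrogroup of a gyrogroup `G`. The coset space
`G/H = {a ⊕ H : a ∈ G}` is an invariant set of the geometry `(G, Γₘ)` if and only if `H` is
strong in `G`, i.e. `gyr[a,b](H) = H` for all `a, b ∈ G`. -/
theorem stmt14 {G : Type*} [Gyrogroup G] (H : Set G) (hH : IsSubgyrogroup H) :
    IsInvariantSet (Γm G) {X : Set G | ∃ a : G, X = op a '' H} ↔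
      ∀ a b : G, gyr a b '' H = H := by
  constructor
  · -- invariance implies strong
    intro hinv a b
    have hHmem : H ∈ {X : Set G | ∃ a : G, X = op a '' H} := by
      refine ⟨e, ?_⟩
      rw [show op (e : G) = id from funext fun x => op_e x, Set.image_id]
    have hT : (Lperm e * gyrPerm a b : Equiv.Perm G) ∈ Γm G :=
      ⟨e, gyrPerm a b, Subgroup.subset_closure ⟨a, b, rfl⟩, rfl⟩
    obtain ⟨c, hc⟩ := hinv H hHmem _ hT
    have himg : ⇑(Lperm e * gyrPerm a b : Equiv.Perm G) '' H = gyr a b '' H := by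
      apply Set.image_congr
      intro x _
      show op e (gyr a b x) = gyr a b x
      rw [op_e]
    rw [himg] at hc
    have he : e ∈ op c '' H := by
      rw [← hc]
      exact ⟨e, e_mem hH, gyr_e a b⟩
    obtain ⟨h, hh, hch⟩ := he
    have hcH : c ∈ H := by
      rw [eq_inv_of_op_eq_e hch]
      exact hH.2.2.1 h hh
    rw [hc, coset_self hH hcH]
  · -- strong implies invariance
    intro hst X hX T hT
    obtain ⟨b, rfl⟩ := hX
    obtain ⟨a, γ, hγ, rfl⟩ := hT
    -- every element of GYR maps cosets to cosets
    have hP : ∀ γ ∈ Gyrogroup.GYR G, (∀ x y : G, γ (op x y) = op (γ x) (γ y)) ∧ ⇑γ '' H = H := by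
      intro γ hγ
      induction hγ using Subgroup.closure_induction with
      | mem π hπ =>
        obtain ⟨u, v, rfl⟩ := hπ
        exact ⟨fun x y => gyr_op u v x y, hst u v⟩
      | one => exact ⟨fun x y => rfl, Set.image_id H⟩
      | mul π₁ π₂ _ _ h1 h2 =>
        refine ⟨fun x y => ?_, ?_⟩
        · show π₁ (π₂ (op x y)) = op (π₁ (π₂ x)) (π₁ (π₂ y))
          rw [h2.1, h1.1]
        · show ⇑π₁ ∘ ⇑π₂ '' H = H
          rw [Set.image_comp, h2.2, h1.2]
      | inv π _ h1 =>
        refine ⟨fun x y => ?_, ?_⟩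
        · apply π.injective
          rw [Equiv.Perm.inv_def, Equiv.apply_symm_apply, h1.1]
          simp
        · have : ⇑π⁻¹ '' (⇑π '' H) = H := by
            rw [← Set.image_comp]
            simp
          rw [h1.2] at this
          exact this
    obtain ⟨hop, himg⟩ := hP γ hγ
    have h1 : ⇑(Lperm a * γ) '' (op b '' H) = op a '' (⇑γ '' (op b '' H)) := by
      rw [show ⇑(Lperm a * γ) = op a ∘ ⇑γ from rfl, Set.image_comp]
    have h2 : ⇑γ '' (op b '' H) = op (γ b) '' H := by
      rw [Set.image_image]
      conv_rhs => rw [← himg]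
      rw [Set.image_image]
      exact Set.image_congr fun h _ => hop b h
    refine ⟨op a (γ b), ?_⟩
    rw [h1, h2, op_image_op_image hst]
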